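/- Let A ∈ ℝ^{n×2} with rows a₁ᵀ,…,aₙᵀ and b ∈ ℝⁿ with nonnegative entries. Let x* be a unit vector minimizing ‖Ax − b‖₁ over unit vectors x ∈ ℝ². Then there is a finite set C of O(n) unit vectors (the minimizers of the individual residuals |aᵢᵀy − bᵢ| over unit vectors y) containing a vector x' with ‖Ax' − b‖₁ ≤ 4·‖Ax* − b‖₁. -/

import Mathlib

open Real RealInnerProductSpace

lemma sin_abs_le (x : ℝ) (h : |x| ≤ π) : |Real.sin x| = Real.sin |x| := by
  rcases le_or_gt 0 x with hx | hx
  · rw [abs_of_nonneg hx, abs_of_nonneg (Real.sin_nonneg_of_nonneg_of_le_pi hx (by rwa [abs_of_nonneg hx] at h))]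
  · have hπ : -x ≤ π := by rwa [abs_of_neg hx] at h
    have h2 : 0 ≤ Real.sin (-x) := Real.sin_nonneg_of_nonneg_of_le_pi (by linarith) hπ
    rw [Real.sin_neg] at h2
    have h3 : Real.sin x ≤ 0 := by linarith
    rw [abs_of_neg hx, Real.sin_neg, abs_of_nonpos h3]

lemma sin_mono_01 {x y : ℝ} (hx : 0 ≤ x) (hy : y ≤ π/2) (hxy : x ≤ y) :
    Real.sin x ≤ Real.sin y := by
  rcases eq_or_lt_of_le hxy with rfl | h
  · exact le_refl _
  · exact le_of_lt (Real.strictMonoOn_sin ⟨by linarith [Real.pi_pos], by linarith⟩ ⟨by linarith [Real.pi_pos], hy⟩ h)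

lemma crux {θ α : ℝ} (hθ0 : 0 ≤ θ) (hθπ : θ ≤ π) (hα0 : 0 ≤ α) (hαπ : α ≤ π/2) :
    Real.sin θ + Real.sin (|θ - α|/2) ≤ 3 * Real.sin ((θ+α)/2) := by
  set D := |θ - α|/2 with hD
  set A := (θ+α)/2 with hA
  have hD0 : 0 ≤ D := by positivity
  have hDhalf : D ≤ π/2 := by
    rw [hD]; rcases abs_cases (θ - α) with ⟨h1,_⟩|⟨h1,_⟩ <;> rw [h1] <;> linarith
  have hA0 : 0 ≤ A := by rw [hA]; linarith
  have hAπ : A ≤ π := by rw [hA]; linarith [Real.pi_pos]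
  have hDA : D ≤ A := by
    rw [hD, hA]; rcases abs_cases (θ - α) with ⟨h1,_⟩|⟨h1,_⟩ <;> rw [h1] <;> linarith
  have hDA' : D ≤ π - A := by
    rw [hD, hA]; rcases abs_cases (θ - α) with ⟨h1,_⟩|⟨h1,_⟩ <;> rw [h1] <;> linarith
  have hsA : 0 ≤ Real.sin A := Real.sin_nonneg_of_nonneg_of_le_pi hA0 hAπ
  have hsDA : Real.sin D ≤ Real.sin A := by
    rcases le_or_gt A (π/2) with h | h
    · exact sin_mono_01 hD0 h hDA
    · rw [← Real.sin_pi_sub A]; exact sin_mono_01 hD0 (by linarith) hDA'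
  have habs : |θ - A| = D := by
    rw [hD, hA, show θ - (θ+α)/2 = (θ - α)/2 by ring, abs_div, abs_of_nonneg (by norm_num : (0:ℝ) ≤ 2)]
  have hθsin : Real.sin θ ≤ Real.sin A + Real.sin D := by
    calc Real.sin θ = Real.sin A * Real.cos (θ - A) + Real.cos A * Real.sin (θ - A) := by
            rw [← Real.sin_add]; ring_nf
      _ ≤ Real.sin A * 1 + |Real.cos A * Real.sin (θ - A)| := by
            gcongr
            · exact Real.cos_le_one _
            · exact le_abs_self _
      _ ≤ Real.sin A + Real.sin D := by
            rw [abs_mul]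
            have h1 : |Real.cos A| ≤ 1 := Real.abs_cos_le_one A
            have h2 : |Real.sin (θ - A)| = Real.sin |θ - A| := sin_abs_le _ (by rw [habs]; linarith [Real.pi_pos])
            rw [h2, habs]
            have h3 : 0 ≤ Real.sin D := Real.sin_nonneg_of_nonneg_of_le_pi hD0 (by linarith [Real.pi_pos])
            nlinarith [abs_nonneg (Real.cos A)]
  linarith

lemma TL {θ ζ α : ℝ} (hθ0 : 0 ≤ θ) (hθπ : θ ≤ π) (hζ0 : 0 ≤ ζ) (hζπ : ζ ≤ π)
    (hα0 : 0 ≤ α) (hαπ : α ≤ π/2) (h : |θ - ζ| ≤ |θ - α|) :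
    |Real.cos ζ - Real.cos α| ≤ 4 * |Real.cos θ - Real.cos α| := by
  have hπ := Real.pi_pos
  set D := |θ - α|/2 with hDdef
  set A := (θ+α)/2 with hAdef
  have hD0 : 0 ≤ D := by positivity
  have hDhalf : D ≤ π/2 := by
    rw [hDdef]; rcases abs_cases (θ - α) with ⟨h1,_⟩|⟨h1,_⟩ <;> rw [h1] <;> linarith
  have hA0 : 0 ≤ A := by rw [hAdef]; linarith
  have hAπ : A ≤ π := by rw [hAdef]; linarith
  have hsA : 0 ≤ Real.sin A := Real.sin_nonneg_of_nonneg_of_le_pi hA0 hAπ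
  have hsD : 0 ≤ Real.sin D := Real.sin_nonneg_of_nonneg_of_le_pi hD0 (by linarith)
  have hsθ : 0 ≤ Real.sin θ := Real.sin_nonneg_of_nonneg_of_le_pi hθ0 hθπ
  -- r = 2 sin A sin D
  have hr : |Real.cos θ - Real.cos α| = 2 * Real.sin A * Real.sin D := by
    rw [Real.cos_sub_cos, abs_mul, abs_mul, abs_neg, abs_two,
      abs_of_nonneg hsA, sin_abs_le _ (by rw [abs_div, abs_of_nonneg (by norm_num : (0:ℝ) ≤ 2)]; linarith), hDdef,
      abs_div, abs_of_nonneg (by norm_num : (0:ℝ) ≤ 2)]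
  -- bound |cos ζ - cos θ|
  have hE : Real.sin (|ζ - θ|/2) ≤ Real.sin D := by
    apply sin_mono_01 (by positivity) hDhalf
    have : |ζ - θ| = |θ - ζ| := abs_sub_comm _ _
    rw [hDdef]; linarith [this ▸ h]
  have hE0 : 0 ≤ Real.sin (|ζ - θ|/2) :=
    Real.sin_nonneg_of_nonneg_of_le_pi (by positivity)
      (by rcases abs_cases (ζ - θ) with ⟨h1,_⟩|⟨h1,_⟩ <;> rw [h1] <;> linarith)
  have habs2 : |Real.sin ((ζ - θ)/2)| = Real.sin (|ζ - θ|/2) := by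
    rw [sin_abs_le _ (by rw [abs_div, abs_of_nonneg (by norm_num : (0:ℝ) ≤ 2)]; rcases abs_cases (ζ - θ) with ⟨h1,_⟩|⟨h1,_⟩ <;> rw [h1] <;> linarith),
      abs_div, abs_of_nonneg (by norm_num : (0:ℝ) ≤ 2)]
  have hmid : |Real.sin ((ζ + θ)/2)| ≤ Real.sin θ + Real.sin (|ζ - θ|/2) := by
    have hrep : (ζ + θ)/2 = θ + (ζ - θ)/2 := by ring
    rw [hrep, Real.sin_add]
    calc |Real.sin θ * Real.cos ((ζ-θ)/2) + Real.cos θ * Real.sin ((ζ-θ)/2)|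
        ≤ |Real.sin θ * Real.cos ((ζ-θ)/2)| + |Real.cos θ * Real.sin ((ζ-θ)/2)| := abs_add_le _ _
      _ ≤ Real.sin θ + Real.sin (|ζ - θ|/2) := by
          rw [abs_mul, abs_mul, abs_of_nonneg hsθ, habs2]
          nlinarith [Real.abs_cos_le_one ((ζ-θ)/2), Real.abs_cos_le_one θ, abs_nonneg (Real.cos θ)]
  have hzt : |Real.cos ζ - Real.cos θ| ≤ 3 * |Real.cos θ - Real.cos α| := by
    have hcc : |Real.cos ζ - Real.cos θ| = 2 * |Real.sin ((ζ+θ)/2)| * |Real.sin ((ζ-θ)/2)| := by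
      rw [Real.cos_sub_cos, abs_mul, abs_mul, abs_neg, abs_two]
    have hcrux := crux hθ0 hθπ hα0 hαπ
    rw [hcc, habs2, hr]
    have h1 : 2 * |Real.sin ((ζ+θ)/2)| * Real.sin (|ζ - θ|/2)
        ≤ 2 * (Real.sin θ + Real.sin (|ζ - θ|/2)) * Real.sin D := by
      apply mul_le_mul _ hE hE0 (by positivity)
      nlinarith
    calc 2 * |Real.sin ((ζ+θ)/2)| * Real.sin (|ζ - θ|/2)
        ≤ 2 * (Real.sin θ + Real.sin (|ζ - θ|/2)) * Real.sin D := h1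
      _ ≤ 2 * (Real.sin θ + Real.sin D) * Real.sin D := by nlinarith
      _ ≤ 2 * (3 * Real.sin A) * Real.sin D := by
          have : Real.sin θ + Real.sin D ≤ 3 * Real.sin A := by rw [hDdef, hAdef]; exact hcrux
          nlinarith
      _ = 3 * (2 * Real.sin A * Real.sin D) := by ring
  calc |Real.cos ζ - Real.cos α| ≤ |Real.cos ζ - Real.cos θ| + |Real.cos θ - Real.cos α| := by
        have := abs_sub_le (Real.cos ζ) (Real.cos θ) (Real.cos α); linarith
    _ ≤ 4 * |Real.cos θ - Real.cos α| := by linarith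

lemma SL (p q m w β s : ℝ) (hx : p^2+q^2=1) (hz : m^2+w^2=1) (hy : β^2+s^2=1)
    (hq : 0 ≤ q) (hs : 0 ≤ s) (hβ : 0 ≤ β)
    (hyp : p*β + q*s ≤ p*m + q*w) : |m - β| ≤ 4*|p - β| := by
  have hπ := Real.pi_pos
  have hp1 : -1 ≤ p := by nlinarith
  have hp2 : p ≤ 1 := by nlinarith
  have hm1 : -1 ≤ m := by nlinarith
  have hm2 : m ≤ 1 := by nlinarith
  have hβ2 : β ≤ 1 := by nlinarith
  set θ := Real.arccos p with hθdef
  set ζ := Real.arccos m with hζdef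
  set α := Real.arccos β with hαdef
  have hcθ : Real.cos θ = p := Real.cos_arccos hp1 hp2
  have hcζ : Real.cos ζ = m := Real.cos_arccos hm1 hm2
  have hcα : Real.cos α = β := Real.cos_arccos (by linarith) hβ2
  have hsθ : Real.sin θ = q := by
    rw [hθdef, Real.sin_arccos, show 1-p^2 = q^2 by linarith, Real.sqrt_sq hq]
  have hsα : Real.sin α = s := by
    rw [hαdef, Real.sin_arccos, show 1-β^2 = s^2 by linarith, Real.sqrt_sq hs]
  have hsζ : Real.sin ζ = |w| := by
    rw [hζdef, Real.sin_arccos, show 1-m^2 = w^2 by linarith, Real.sqrt_sq_eq_abs]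
  have hθ0 : 0 ≤ θ := Real.arccos_nonneg _
  have hθπ : θ ≤ π := Real.arccos_le_pi _
  have hζ0 : 0 ≤ ζ := Real.arccos_nonneg _
  have hζπ : ζ ≤ π := Real.arccos_le_pi _
  have hα0 : 0 ≤ α := Real.arccos_nonneg _
  have hαπ : α ≤ π/2 := Real.arccos_le_pi_div_two.2 hβ
  have hchain : Real.cos (θ - α) ≤ Real.cos (θ - ζ) := by
    rw [Real.cos_sub, Real.cos_sub, hcθ, hcα, hsθ, hsα, hcζ, hsζ]
    have : q * w ≤ q * |w| := by
      have := le_abs_self w; nlinarith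
    linarith
  have hdist : |θ - ζ| ≤ |θ - α| := by
    by_contra hcon
    push_neg at hcon
    have h1 : Real.cos |θ - ζ| < Real.cos |θ - α| :=
      Real.cos_lt_cos_of_nonneg_of_le_pi (abs_nonneg _)
        (by rcases abs_cases (θ - ζ) with ⟨h1,_⟩|⟨h1,_⟩ <;> rw [h1] <;> linarith) hcon
    rw [Real.cos_abs, Real.cos_abs] at h1
    linarith
  have := TL hθ0 hθπ hζ0 hζπ hα0 hαπ hdist
  rwa [hcθ, hcζ, hcα] at this

noncomputable def vec2 (x0 x1 : ℝ) : EuclideanSpace ℝ (Fin 2) :=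
  (WithLp.equiv 2 (Fin 2 → ℝ)).symm ![x0, x1]

lemma inner2 (v w : EuclideanSpace ℝ (Fin 2)) : ⟪v, w⟫ = v 0 * w 0 + v 1 * w 1 := by
  simp [PiLp.inner_apply, Fin.sum_univ_two, RCLike.inner_apply, starRingEnd_apply]
  ring

lemma normsq2 (v : EuclideanSpace ℝ (Fin 2)) : ‖v‖^2 = v 0^2 + v 1^2 := by
  rw [← real_inner_self_eq_norm_sq]; rw [inner2]; ring

set_option maxHeartbeats 1600000 in
lemma key (a : EuclideanSpace ℝ (Fin 2)) (ha : a ≠ 0) (b : ℝ) (hb : 0 ≤ b)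
    (x : EuclideanSpace ℝ (Fin 2)) (hx : ‖x‖ = 1) :
    ∃ y : EuclideanSpace ℝ (Fin 2), ‖y‖ = 1 ∧
      (∀ z : EuclideanSpace ℝ (Fin 2), ‖z‖ = 1 → |⟪a, y⟫ - b| ≤ |⟪a, z⟫ - b|) ∧
      (∀ z : EuclideanSpace ℝ (Fin 2), ‖z‖ = 1 → ‖z - x‖ ≤ ‖y - x‖ →
        |⟪a, z⟫ - b| ≤ 4 * |⟪a, x⟫ - b|) := by
  set a0 := a 0 with ha0; set a1 := a 1 with ha1
  have hcpos : 0 < ‖a‖ := norm_pos_iff.2 ha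
  set c := ‖a‖ with hc
  have hcsq : c^2 = a0^2 + a1^2 := normsq2 a
  set u0 := a0 / c with hu0; set u1 := a1 / c with hu1
  have huu : u0^2 + u1^2 = 1 := by
    rw [hu0, hu1]; field_simp; linarith
  have hau0 : a0 = c * u0 := by rw [hu0]; field_simp
  have hau1 : a1 = c * u1 := by rw [hu1]; field_simp
  set β := min (b/c) 1 with hβdef
  have hβ0 : 0 ≤ β := le_min (by positivity) one_pos.le
  have hβ1 : β ≤ 1 := min_le_right _ _
  set s := Real.sqrt (1 - β^2) with hsdef
  have hs0 : 0 ≤ s := Real.sqrt_nonneg _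
  have hβs : β^2 + s^2 = 1 := by
    rw [hsdef, Real.sq_sqrt (by nlinarith)]; ring
  set x0 := x 0 with hx0; set x1 := x 1 with hx1
  have hxx : x0^2 + x1^2 = 1 := by
    have := normsq2 x; rw [hx] at this; simpa using this.symm
  set q' := -u1 * x0 + u0 * x1 with hq'
  set σ : ℝ := if 0 ≤ q' then 1 else -1 with hσdef
  have hσsq : σ^2 = 1 := by rw [hσdef]; split <;> norm_num
  have hσq : 0 ≤ σ * q' := by
    rw [hσdef]; split
    · rename_i h; simpa using h
    · rename_i h; push_neg at h; linarith
  set y := vec2 (β*u0 - σ*s*u1) (β*u1 + σ*s*u0) with hydef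
  have hy0 : y 0 = β*u0 - σ*s*u1 := by simp [hydef, vec2]
  have hy1 : y 1 = β*u1 + σ*s*u0 := by simp [hydef, vec2]
  clear_value y
  clear_value a0 a1 c u0 u1 β s x0 x1 q' σ
  have hynorm : ‖y‖ = 1 := by
    have h2 : ‖y‖^2 = 1 := by
      rw [normsq2, hy0, hy1]
      linear_combination (β^2 + σ^2*s^2) * huu + s^2 * hσsq + hβs
    rw [← Real.sqrt_sq (norm_nonneg y), h2, Real.sqrt_one]
  have hay : ⟪a, y⟫ = c * β := by
    rw [inner2, ← ha0, ← ha1, hy0, hy1, hau0, hau1]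
    linear_combination (c*β) * huu
  have hcβb : c * β ≤ b := by
    rcases min_cases (b/c) 1 with ⟨h1,h2⟩|⟨h1,h2⟩
    · rw [hβdef, h1]
      have hh : c * (b/c) = b := by field_simp
      rw [hh]
    · rw [hβdef, h1, mul_one]
      linarith [(one_lt_div hcpos).1 h2]
  have hresy : |⟪a, y⟫ - b| = b - c*β := by
    rw [hay, abs_of_nonpos (by linarith : c*β - b ≤ 0)]; ring
  refine ⟨y, hynorm, ?_, ?_⟩
  · -- minimizer
    intro z hz
    rw [hresy]
    have hcs := real_inner_le_norm a z
    rw [hz, mul_one, ← hc] at hcs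
    rcases min_cases (b/c) 1 with ⟨h1,h2⟩|⟨h1,h2⟩
    · have hh : c * β = b := by rw [hβdef, h1]; field_simp
      rw [hh]; simp [abs_nonneg]
    · have hh : c * β = c := by rw [hβdef, h1, mul_one]
      rw [hh]
      calc b - c ≤ b - ⟪a, z⟫ := by linarith
        _ ≤ |⟪a, z⟫ - b| := by rw [abs_sub_comm]; exact le_abs_self _
  · -- approximation
    intro z hz hzy
    set z0 := z 0 with hz0; set z1 := z 1 with hz1
    have hzz : z0^2 + z1^2 = 1 := by
      have := normsq2 z; rw [hz] at this; simpa using this.symm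
    set p := u0*x0 + u1*x1 with hp
    set m := u0*z0 + u1*z1 with hm
    set w' := -u1*z0 + u0*z1 with hw'
    set q := σ * q' with hqq
    set w := σ * w' with hww
    clear_value z0 z1
    have hpq : p^2 + q^2 = 1 := by
      rw [hp, hqq, hq']
      linear_combination (x0^2+x1^2) * huu + hxx + (-u1*x0+u0*x1)^2 * hσsq
    have hmw : m^2 + w^2 = 1 := by
      rw [hm, hww, hw']
      linear_combination (z0^2+z1^2) * huu + hzz + (-u1*z0+u0*z1)^2 * hσsq
    have hax : ⟪a, x⟫ = c * p := by
      rw [inner2, ← ha0, ← ha1, ← hx0, ← hx1, hau0, hau1, hp]; ring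
    have haz : ⟪a, z⟫ = c * m := by
      rw [inner2, ← ha0, ← ha1, ← hz0, ← hz1, hau0, hau1, hm]; ring
    have hiner : ⟪y, x⟫ ≤ ⟪z, x⟫ := by
      have h1 : ‖z - x‖^2 ≤ ‖y - x‖^2 :=
        pow_le_pow_left₀ (norm_nonneg _) hzy 2
      rw [norm_sub_sq_real, norm_sub_sq_real, hz, hx, hynorm] at h1
      linarith
    have hyx : ⟪y, x⟫ = p*β + q*s := by
      rw [inner2, hy0, hy1, ← hx0, ← hx1, hp, hqq, hq']; ring
    have hzx : ⟪z, x⟫ = p*m + q*w := by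
      have h7 : q*w = q'*w' := by rw [hqq, hww]; linear_combination (q'*w') * hσsq
      rw [inner2, ← hz0, ← hz1, ← hx0, ← hx1, h7, hp, hm, hq', hw']
      linear_combination (-(z0*x0+z1*x1)) * huu
    have hSL := SL p q m w β s hpq hmw hβs hσq hs0 hβ0 (by
      rw [hyx, hzx] at hiner; linarith)
    rw [hax, haz]
    rcases min_cases (b/c) 1 with ⟨h1,h2⟩|⟨h1,h2⟩
    · have hh : c * β = b := by rw [hβdef, h1]; field_simp
      have h3 : |c*m - b| = c * |m - β| := by
        rw [← hh, ← mul_sub, abs_mul, abs_of_pos hcpos]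
      have h4 : |c*p - b| = c * |p - β| := by
        rw [← hh, ← mul_sub, abs_mul, abs_of_pos hcpos]
      rw [h3, h4]
      have h5 := mul_le_mul_of_nonneg_left hSL hcpos.le
      linarith
    · have hβ1' : β = 1 := by rw [hβdef, h1]
      have hbc : c ≤ b := by
        have := (one_lt_div hcpos).1 h2; linarith
      have hm1 : m ≤ 1 := by
        have h1 : m^2 ≤ 1 := by linarith [sq_nonneg w]
        exact (abs_le.1 ((sq_le_one_iff_abs_le_one _).1 h1)).2
      have hp1 : p ≤ 1 := by
        have h1 : p^2 ≤ 1 := by linarith [sq_nonneg q]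
        exact (abs_le.1 ((sq_le_one_iff_abs_le_one _).1 h1)).2
      rw [hβ1'] at hSL
      rw [abs_of_nonpos (by linarith : m - 1 ≤ 0), abs_of_nonpos (by linarith : p - 1 ≤ 0)] at hSL
      have hcm : c*m ≤ c := by
        have := mul_le_of_le_one_right hcpos.le hm1; linarith
      have hcp : c*p ≤ c := by
        have := mul_le_of_le_one_right hcpos.le hp1; linarith
      rw [abs_of_nonpos (by linarith : c*m - b ≤ 0), abs_of_nonpos (by linarith : c*p - b ≤ 0)]
      have h6 := mul_le_mul_of_nonneg_left hSL hcpos.le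
      linarith

/-- Constrained `ℓ₁` regression over the unit circle in `ℝ²`: if `x*` is a
unit vector minimizing `‖Ax − b‖₁` over unit vectors, then the set `C` of unit
vectors minimizing an individual residual `|aᵢᵀy − bᵢ|` over unit vectors
contains a vector `x'` with `‖Ax' − b‖₁ ≤ 4 ‖Ax* − b‖₁`. -/
theorem stmt9 (n : ℕ) (hn : 0 < n)
    (a : Fin n → EuclideanSpace ℝ (Fin 2)) (b : Fin n → ℝ)
    (hb : ∀ i, 0 ≤ b i)
    (xstar : EuclideanSpace ℝ (Fin 2)) (hxstar : ‖xstar‖ = 1)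
    (hopt : ∀ y : EuclideanSpace ℝ (Fin 2), ‖y‖ = 1 →
      ∑ i, |⟪a i, xstar⟫ - b i| ≤ ∑ i, |⟪a i, y⟫ - b i|)
    (C : Set (EuclideanSpace ℝ (Fin 2)))
    (hC : C = {y | ‖y‖ = 1 ∧ ∃ i : Fin n,
      ∀ z : EuclideanSpace ℝ (Fin 2), ‖z‖ = 1 →
        |⟪a i, y⟫ - b i| ≤ |⟪a i, z⟫ - b i|}) :
    ∃ x' ∈ C, ∑ i, |⟪a i, x'⟫ - b i| ≤ 4 * ∑ i, |⟪a i, xstar⟫ - b i| := by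
  subst hC
  have hS0 : 0 ≤ ∑ i, |⟪a i, xstar⟫ - b i| :=
    Finset.sum_nonneg fun i _ => abs_nonneg _
  by_cases hdeg : ∃ i, a i = 0
  · obtain ⟨i, hi⟩ := hdeg
    refine ⟨xstar, ⟨hxstar, i, fun z hz => ?_⟩, by linarith⟩
    rw [hi]
    simp
  · push_neg at hdeg
    choose y hy1 hy2 hy3 using fun i => key (a i) (hdeg i) (b i) (hb i) xstar hxstar
    obtain ⟨j, -, hj⟩ := Finset.exists_min_image Finset.univ
      (fun i => ‖y i - xstar‖) ⟨⟨0, hn⟩, Finset.mem_univ _⟩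
    refine ⟨y j, ⟨hy1 j, j, hy2 j⟩, ?_⟩
    calc ∑ i, |⟪a i, y j⟫ - b i| ≤ ∑ i, 4 * |⟪a i, xstar⟫ - b i| :=
          Finset.sum_le_sum fun i _ => hy3 i (y j) (hy1 j) (hj i (Finset.mem_univ i))
      _ = 4 * ∑ i, |⟪a i, xstar⟫ - b i| := by rw [Finset.mul_sum]
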